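/- Let v ∈ ℝ^{n+2} be a unit vector with J v = λ v for some real λ, and define a = v(0)|0,R⟩ + Σ_{j=1}^{n} v(j)(√q|j,L⟩ + √p|j,R⟩) + v(n+1)|n+1,L⟩ ∈ H_n and b = S a. Then ‖a‖ = ‖b‖ = 1, U a = b, U b = 2λ b − a, and the inner product ⟨a, b⟩ = λ. In particular U preserves the span of {a, b}. -/

import Mathlib

open Filter Finset

/- Index convention for the Hilbert space `H_n` of dimension `2n+2`:
index `0` is `|0,R⟩`, index `2j-1` is `|j,L⟩` and `2j` is `|j,R⟩` for `1 ≤ j ≤ n`,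
and index `2n+1` is `|n+1,L⟩`. -/

/-- Entries of the coin operator `C`. Column `l` is the image of the `l`-th basis vector. -/
noncomputable def coinEntry (p q : ℝ) (n k l : ℕ) : ℝ :=
  if l = 0 ∨ l = 2 * n + 1 then (if k = l then 1 else 0)
  else if l % 2 = 1 then
    (if k = l then 2 * q - 1 else if k = l + 1 then 2 * Real.sqrt (p * q) else 0)
  else
    (if k = l then 2 * p - 1 else if k + 1 = l then 2 * Real.sqrt (p * q) else 0)

noncomputable def coinM (p q : ℝ) (n : ℕ) : Matrix (Fin (2 * n + 2)) (Fin (2 * n + 2)) ℂ :=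
  fun k l => ((coinEntry p q n k.1 l.1 : ℝ) : ℂ)

/-- The shift operator: `S|j,R⟩ = |j+1,L⟩`, `S|j,L⟩ = |j-1,R⟩`; in our indexing,
`S e_l = e_{l+1}` for even `l` and `S e_l = e_{l-1}` for odd `l`. -/
def shiftM (n : ℕ) : Matrix (Fin (2 * n + 2)) (Fin (2 * n + 2)) ℂ :=
  fun k l => if l.1 % 2 = 0 then (if k.1 = l.1 + 1 then 1 else 0)
             else (if k.1 + 1 = l.1 then 1 else 0)

/-- The walk operator `U = S C`. -/
noncomputable def walkM (p q : ℝ) (n : ℕ) : Matrix (Fin (2 * n + 2)) (Fin (2 * n + 2)) ℂ :=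
  shiftM n * coinM p q n

/-- The `(n+2) × (n+2)` Jacobi matrix of the reflected random walk on the path:
zero diagonal, `J(0,1) = √q`, `J(i,i+1) = √(pq)` for `1 ≤ i ≤ n-1`, `J(n,n+1) = √p`,
and symmetric. -/
noncomputable def jacobiM (p q : ℝ) (n : ℕ) : Matrix (Fin (n + 2)) (Fin (n + 2)) ℝ :=
  fun k l =>
    if k.1 + 1 = l.1 then
      (if k.1 = 0 then Real.sqrt q else if k.1 = n then Real.sqrt p else Real.sqrt (p * q))
    else if l.1 + 1 = k.1 then
      (if l.1 = 0 then Real.sqrt q else if l.1 = n then Real.sqrt p else Real.sqrt (p * q))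
    else 0

/-- The lift `a ∈ H_n` of a vector `v ∈ ℝ^{n+2}`:
`a = v(0)|0,R⟩ + ∑_{j=1}^{n} v(j)(√q|j,L⟩ + √p|j,R⟩) + v(n+1)|n+1,L⟩`. -/
noncomputable def liftVec (p q : ℝ) (n : ℕ) (v : Fin (n + 2) → ℝ) : Fin (2 * n + 2) → ℂ :=
  fun k =>
    if k.1 = 0 then ((v 0 : ℝ) : ℂ)
    else if k.1 = 2 * n + 1 then ((v (Fin.last (n + 1)) : ℝ) : ℂ)
    else (((if k.1 % 2 = 1 then Real.sqrt q else Real.sqrt p) *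
      v ⟨(k.1 + 1) / 2, by have := k.isLt; omega⟩ : ℝ) : ℂ)


section Aux
open Finset

/-- Extension of a `Fin (n+2)` vector to `ℕ` by zero. -/
noncomputable def wExt (n : ℕ) (v : Fin (n + 2) → ℝ) : ℕ → ℝ :=
  fun i => if h : i < n + 2 then v ⟨i, h⟩ else 0

/-- Real entries of the lifted vector, indexed by `ℕ`. -/
noncomputable def aExt (p q : ℝ) (n : ℕ) (v : Fin (n + 2) → ℝ) : ℕ → ℝ :=
  fun k =>
    if k = 0 then wExt n v 0
    else if k = 2 * n + 1 then wExt n v (n + 1)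
    else (if k % 2 = 1 then Real.sqrt q else Real.sqrt p) * wExt n v ((k + 1) / 2)

lemma aExt_zero (p q : ℝ) (n : ℕ) (v : Fin (n + 2) → ℝ) : aExt p q n v 0 = wExt n v 0 := by
  simp [aExt]

lemma aExt_top (p q : ℝ) (n : ℕ) (v : Fin (n + 2) → ℝ) :
    aExt p q n v (2 * n + 1) = wExt n v (n + 1) := by
  unfold aExt; rw [if_neg (by omega), if_pos rfl]

lemma aExt_odd (p q : ℝ) (n : ℕ) (v : Fin (n + 2) → ℝ) (k : ℕ) (h1 : k % 2 = 1)
    (h2 : k ≠ 2 * n + 1) : aExt p q n v k = Real.sqrt q * wExt n v ((k + 1) / 2) := by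
  unfold aExt; rw [if_neg (by omega), if_neg h2, if_pos h1]

lemma aExt_even (p q : ℝ) (n : ℕ) (v : Fin (n + 2) → ℝ) (k : ℕ) (h1 : k % 2 = 0)
    (h2 : k ≠ 0) : aExt p q n v k = Real.sqrt p * wExt n v ((k + 1) / 2) := by
  unfold aExt; rw [if_neg h2, if_neg (by omega), if_neg (by omega)]

lemma liftVec_eq (p q : ℝ) (n : ℕ) (v : Fin (n + 2) → ℝ) (k : Fin (2 * n + 2)) :
    liftVec p q n v k = ((aExt p q n v k.1 : ℝ) : ℂ) := by
  unfold liftVec aExt wExt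
  have h1 : (0 : ℕ) < n + 2 := by omega
  have h2 : n + 1 < n + 2 := by omega
  rcases k with ⟨k, hk⟩
  by_cases e0 : k = 0
  · subst e0; simp [h1]
  by_cases e1 : k = 2 * n + 1
  · subst e1; simp [h2, e0]; rfl
  · simp only [e0, e1, if_false]
    have : (k + 1) / 2 < n + 2 := by omega
    rw [dif_pos this]

/-- The pairing involution on indices. -/
def sigFn (k : ℕ) : ℕ := if k % 2 = 0 then k + 1 else k - 1

lemma sigFn_lt {n k : ℕ} (hk : k < 2 * n + 2) : sigFn k < 2 * n + 2 := by
  unfold sigFn; split <;> omega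

lemma sigFn_sigFn (k : ℕ) : sigFn (sigFn k) = k := by
  unfold sigFn; split <;> (split <;> omega)

lemma sum_eq_two {N : ℕ} {M : Type*} [AddCommMonoid M] (f : Fin N → M) (i j : Fin N)
    (hij : i ≠ j) (h : ∀ l, l ≠ i → l ≠ j → f l = 0) : ∑ l, f l = f i + f j := by
  rw [← Finset.sum_pair hij]
  exact (Finset.sum_subset (Finset.subset_univ _) (fun x _ hx => h x
    (fun h' => hx (by simp [h'])) (fun h' => hx (by simp [h'])))).symm

lemma shift_apply_even (n : ℕ) (x : Fin (2 * n + 2) → ℂ) (k : ℕ) (hk : k < 2 * n + 2)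
    (h : k % 2 = 0) :
    (shiftM n).mulVec x ⟨k, hk⟩ = x ⟨k + 1, by omega⟩ := by
  unfold Matrix.mulVec dotProduct shiftM
  rw [Fintype.sum_eq_single (⟨k + 1, by omega⟩ : Fin (2 * n + 2))]
  · dsimp only
    rw [if_neg (by omega), if_pos rfl, one_mul]
  · intro l hl
    rcases l with ⟨l, hl2⟩
    have hne : l ≠ k + 1 := fun hc => hl (Fin.ext hc)
    dsimp only
    split_ifs <;> (try contradiction) <;> (try contradiction) <;> (try (exfalso; omega)) <;> norm_num

lemma shift_apply_odd (n : ℕ) (x : Fin (2 * n + 2) → ℂ) (k : ℕ) (hk : k < 2 * n + 2)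
    (h : k % 2 = 1) :
    (shiftM n).mulVec x ⟨k, hk⟩ = x ⟨k - 1, by omega⟩ := by
  unfold Matrix.mulVec dotProduct shiftM
  rw [Fintype.sum_eq_single (⟨k - 1, by omega⟩ : Fin (2 * n + 2))]
  · dsimp only
    rw [if_pos (by omega), if_pos (by omega), one_mul]
  · intro l hl
    rcases l with ⟨l, hl2⟩
    have hne : l ≠ k - 1 := fun hc => hl (Fin.ext hc)
    dsimp only
    split_ifs <;> (try contradiction) <;> (try contradiction) <;> (try (exfalso; omega)) <;> norm_num

lemma shift_apply (n : ℕ) (x : Fin (2 * n + 2) → ℂ) (k : Fin (2 * n + 2)) :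
    (shiftM n).mulVec x k = x ⟨sigFn k.1, sigFn_lt k.2⟩ := by
  rcases k with ⟨k, hk⟩
  by_cases h : k % 2 = 0
  · rw [shift_apply_even n x k hk h]
    congr 1
    apply Fin.ext
    show k + 1 = sigFn k
    unfold sigFn
    rw [if_pos h]
  · rw [shift_apply_odd n x k hk (by omega)]
    congr 1
    apply Fin.ext
    show k - 1 = sigFn k
    unfold sigFn
    rw [if_neg h]

lemma shift_shift (n : ℕ) (x : Fin (2 * n + 2) → ℂ) :
    (shiftM n).mulVec ((shiftM n).mulVec x) = x := by
  funext k
  rw [shift_apply, shift_apply]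
  congr 1
  exact Fin.ext (sigFn_sigFn k.1)

lemma coin_apply_zero (p q : ℝ) (n : ℕ) (hn : 1 ≤ n) (x : Fin (2 * n + 2) → ℂ) :
    (coinM p q n).mulVec x ⟨0, by omega⟩ = x ⟨0, by omega⟩ := by
  unfold Matrix.mulVec dotProduct coinM coinEntry
  rw [Fintype.sum_eq_single (⟨0, by omega⟩ : Fin (2 * n + 2))]
  · norm_num
  · intro l hl
    rcases l with ⟨l, hl2⟩
    have hne : l ≠ 0 := fun hc => hl (Fin.ext hc)
    dsimp only
    split_ifs <;> (try contradiction) <;> (try (exfalso; omega)) <;> norm_num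

lemma coin_apply_top (p q : ℝ) (n : ℕ) (hn : 1 ≤ n) (x : Fin (2 * n + 2) → ℂ) :
    (coinM p q n).mulVec x ⟨2 * n + 1, by omega⟩ = x ⟨2 * n + 1, by omega⟩ := by
  unfold Matrix.mulVec dotProduct coinM coinEntry
  rw [Fintype.sum_eq_single (⟨2 * n + 1, by omega⟩ : Fin (2 * n + 2))]
  · norm_num
  · intro l hl
    rcases l with ⟨l, hl2⟩
    have hne : l ≠ 2 * n + 1 := fun hc => hl (Fin.ext hc)
    dsimp only
    split_ifs <;> (try contradiction) <;> (try (exfalso; omega)) <;> norm_num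

lemma coin_apply_odd (p q : ℝ) (n : ℕ) (hn : 1 ≤ n) (x : Fin (2 * n + 2) → ℂ) (k : ℕ)
    (h1 : k % 2 = 1) (h3 : k ≤ 2 * n - 1) :
    (coinM p q n).mulVec x ⟨k, by omega⟩ =
      ((2 * q - 1 : ℝ) : ℂ) * x ⟨k, by omega⟩ +
        ((2 * Real.sqrt (p * q) : ℝ) : ℂ) * x ⟨k + 1, by omega⟩ := by
  unfold Matrix.mulVec dotProduct
  rw [sum_eq_two _ (⟨k, by omega⟩ : Fin (2 * n + 2)) (⟨k + 1, by omega⟩ : Fin (2 * n + 2))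
    (by simp [Fin.ext_iff])]
  · unfold coinM coinEntry
    dsimp only
    rw [if_neg (by omega), if_pos h1, if_pos rfl,
      if_neg (by omega), if_neg (by omega), if_neg (by omega), if_pos rfl]
  · intro l hl1 hl2
    rcases l with ⟨l, hl⟩
    have hne1 : l ≠ k := fun hc => hl1 (Fin.ext hc)
    have hne2 : l ≠ k + 1 := fun hc => hl2 (Fin.ext hc)
    unfold coinM coinEntry
    dsimp only
    split_ifs <;> (try contradiction) <;> (try (exfalso; omega)) <;> norm_num

lemma coin_apply_even (p q : ℝ) (n : ℕ) (hn : 1 ≤ n) (x : Fin (2 * n + 2) → ℂ) (k : ℕ)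
    (h1 : k % 2 = 0) (h2 : 2 ≤ k) (h3 : k ≤ 2 * n) :
    (coinM p q n).mulVec x ⟨k, by omega⟩ =
      ((2 * Real.sqrt (p * q) : ℝ) : ℂ) * x ⟨k - 1, by omega⟩ +
        ((2 * p - 1 : ℝ) : ℂ) * x ⟨k, by omega⟩ := by
  unfold Matrix.mulVec dotProduct
  rw [sum_eq_two _ (⟨k - 1, by omega⟩ : Fin (2 * n + 2)) (⟨k, by omega⟩ : Fin (2 * n + 2))
    (by simp only [ne_eq, Fin.mk.injEq]; omega)]
  · unfold coinM coinEntry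
    dsimp only
    rw [if_neg (by omega), if_pos (by omega), if_neg (by omega), if_pos (by omega),
      if_neg (by omega), if_neg (by omega), if_pos rfl]
  · intro l hl1 hl2
    rcases l with ⟨l, hl⟩
    have hne1 : l ≠ k - 1 := fun hc => hl1 (Fin.ext hc)
    have hne2 : l ≠ k := fun hc => hl2 (Fin.ext hc)
    unfold coinM coinEntry
    dsimp only
    split_ifs <;> (try contradiction) <;> (try (exfalso; omega)) <;> norm_num

lemma jrow_zero (p q : ℝ) (n : ℕ) (v : Fin (n + 2) → ℝ) :
    (jacobiM p q n).mulVec v ⟨0, by omega⟩ = Real.sqrt q * v ⟨1, by omega⟩ := by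
  unfold Matrix.mulVec dotProduct jacobiM
  rw [Fintype.sum_eq_single (⟨1, by omega⟩ : Fin (n + 2))]
  · dsimp only
    rw [if_pos rfl, if_pos rfl]
  · intro l hl
    rcases l with ⟨l, hl2⟩
    have hne : l ≠ 1 := fun hc => hl (Fin.ext hc)
    dsimp only
    split_ifs <;> (try contradiction) <;> (try contradiction) <;> (try (exfalso; omega)) <;> norm_num

lemma jrow_top (p q : ℝ) (n : ℕ) (hn : 1 ≤ n) (v : Fin (n + 2) → ℝ) :
    (jacobiM p q n).mulVec v ⟨n + 1, by omega⟩ = Real.sqrt p * v ⟨n, by omega⟩ := by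
  unfold Matrix.mulVec dotProduct jacobiM
  rw [Fintype.sum_eq_single (⟨n, by omega⟩ : Fin (n + 2))]
  · dsimp only
    split_ifs <;> first | rfl | (exfalso; omega)
  · intro l hl
    rcases l with ⟨l, hl2⟩
    have hne : l ≠ n := fun hc => hl (Fin.ext hc)
    dsimp only
    split_ifs <;> (try contradiction) <;> (try contradiction) <;> (try (exfalso; omega)) <;> norm_num

lemma jrow_mid (p q : ℝ) (n : ℕ) (hn : 1 ≤ n) (v : Fin (n + 2) → ℝ) (j : ℕ)
    (h1 : 1 ≤ j) (h2 : j ≤ n) :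
    (jacobiM p q n).mulVec v ⟨j, by omega⟩ =
      (if j = 1 then Real.sqrt q else Real.sqrt (p * q)) * v ⟨j - 1, by omega⟩ +
        (if j = n then Real.sqrt p else Real.sqrt (p * q)) * v ⟨j + 1, by omega⟩ := by
  unfold Matrix.mulVec dotProduct
  rw [sum_eq_two _ (⟨j - 1, by omega⟩ : Fin (n + 2)) (⟨j + 1, by omega⟩ : Fin (n + 2))
    (by simp only [ne_eq, Fin.mk.injEq]; omega)]
  congr 1
  · unfold jacobiM
    dsimp only
    split_ifs <;> first | rfl | (exfalso; omega)
  · unfold jacobiM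
    dsimp only
    split_ifs <;> first | rfl | (exfalso; omega)
  · intro l hl1 hl2
    rcases l with ⟨l, hl⟩
    have hne1 : l ≠ j - 1 := fun hc => hl1 (Fin.ext hc)
    have hne2 : l ≠ j + 1 := fun hc => hl2 (Fin.ext hc)
    unfold jacobiM
    dsimp only
    split_ifs <;> (try contradiction) <;> (try contradiction) <;> (try (exfalso; omega)) <;> norm_num

lemma sum_range_two_mul (m : ℕ) (f : ℕ → ℝ) :
    ∑ i ∈ range (2 * m), f i = ∑ i ∈ range m, (f (2 * i) + f (2 * i + 1)) := by
  induction m with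
  | zero => simp
  | succ m ih =>
    have h : 2 * (m + 1) = (2 * m) + 1 + 1 := by ring
    rw [h, Finset.sum_range_succ, Finset.sum_range_succ, Finset.sum_range_succ, ih]
    ring


lemma liftVec_eq' (p q : ℝ) (n : ℕ) (v : Fin (n + 2) → ℝ) (k : ℕ) (hk : k < 2 * n + 2) :
    liftVec p q n v ⟨k, hk⟩ = ((aExt p q n v k : ℝ) : ℂ) :=
  liftVec_eq p q n v ⟨k, hk⟩

end Aux

/-- **Lemma.** Let `v` be a unit eigenvector of `J` with eigenvalue `λ`, and set
`a = v(0)|0,R⟩ + ∑_{j=1}^n v(j)(√q|j,L⟩ + √p|j,R⟩) + v(n+1)|n+1,L⟩` and `b = S a`.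
Then `‖a‖ = ‖b‖ = 1`, `U a = b`, `U b = 2λb - a`, and `⟨a,b⟩ = λ`; in particular `U`
preserves the span of `{a, b}`. -/
theorem walkM_on_lifted_eigenvector (n : ℕ) (hn : 1 ≤ n)
    (p q : ℝ) (hp0 : 0 < p) (hp1 : p < 1) (hq0 : 0 < q) (hq1 : q < 1) (hpq : p + q = 1)
    (lam : ℝ) (v : Fin (n + 2) → ℝ)
    (hv : ∑ j : Fin (n + 2), (v j) ^ 2 = 1)
    (heig : (jacobiM p q n).mulVec v = lam • v) :
    (∑ k : Fin (2 * n + 2), ‖liftVec p q n v k‖ ^ 2 = 1) ∧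
    (∑ k : Fin (2 * n + 2),
        ‖(shiftM n).mulVec (liftVec p q n v) k‖ ^ 2 = 1) ∧
    (walkM p q n).mulVec (liftVec p q n v) = (shiftM n).mulVec (liftVec p q n v) ∧
    (walkM p q n).mulVec ((shiftM n).mulVec (liftVec p q n v)) =
      ((2 * lam : ℝ) : ℂ) • (shiftM n).mulVec (liftVec p q n v) - liftVec p q n v ∧
    (∑ k : Fin (2 * n + 2),
        (starRingEnd ℂ) (liftVec p q n v k) * (shiftM n).mulVec (liftVec p q n v) k =
      ((lam : ℝ) : ℂ)) ∧
    (∀ x ∈ Submodule.span ℂ {liftVec p q n v, (shiftM n).mulVec (liftVec p q n v)},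
      (walkM p q n).mulVec x ∈
        Submodule.span ℂ {liftVec p q n v, (shiftM n).mulVec (liftVec p q n v)}) := by
  have hp : (0:ℝ) ≤ p := hp0.le
  have hq : (0:ℝ) ≤ q := hq0.le
  have hs2 : Real.sqrt p * Real.sqrt p = p := Real.mul_self_sqrt hp
  have ht2 : Real.sqrt q * Real.sqrt q = q := Real.mul_self_sqrt hq
  have hst : Real.sqrt (p * q) = Real.sqrt p * Real.sqrt q := Real.sqrt_mul hp q
  have hwv : ∀ j : Fin (n + 2), wExt n v j.1 = v j := fun j => dif_pos j.2
  -- eigenvalue relations in `wExt` form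
  have E0 : Real.sqrt q * wExt n v 1 = lam * wExt n v 0 := by
    have h := congrFun heig ⟨0, by omega⟩
    rw [jrow_zero] at h
    rw [hwv ⟨1, by omega⟩, hwv ⟨0, by omega⟩]
    simpa using h
  have Etop : Real.sqrt p * wExt n v n = lam * wExt n v (n + 1) := by
    have h := congrFun heig ⟨n + 1, by omega⟩
    rw [jrow_top p q n hn] at h
    rw [hwv ⟨n, by omega⟩, hwv ⟨n + 1, by omega⟩]
    simpa using h
  have Emid : ∀ j : ℕ, 1 ≤ j → j ≤ n →
      (if j = 1 then Real.sqrt q else Real.sqrt p * Real.sqrt q) * wExt n v (j - 1) +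
        (if j = n then Real.sqrt p else Real.sqrt p * Real.sqrt q) * wExt n v (j + 1) =
        lam * wExt n v j := by
    intro j h1 h2
    have h := congrFun heig ⟨j, by omega⟩
    rw [jrow_mid p q n hn v j h1 h2, hst] at h
    rw [hwv ⟨j - 1, by omega⟩, hwv ⟨j + 1, by omega⟩, hwv ⟨j, by omega⟩]
    simpa using h
  have hv' : ∑ i ∈ range (n + 2), wExt n v i ^ 2 = 1 := by
    rw [← hv, ← Fin.sum_univ_eq_sum_range (fun i => wExt n v i ^ 2) (n + 2)]
    exact Finset.sum_congr rfl fun j _ => by rw [hwv j]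
  -- values of `b = S a`
  have hbv : ∀ (k : ℕ) (hk : k < 2 * n + 2),
      (shiftM n).mulVec (liftVec p q n v) ⟨k, hk⟩ = ((aExt p q n v (sigFn k) : ℝ) : ℂ) := by
    intro k hk
    rw [shift_apply, liftVec_eq]
  -- C a = a
  have hCa : (coinM p q n).mulVec (liftVec p q n v) = liftVec p q n v := by
    funext k
    rcases k with ⟨k, hk⟩
    by_cases e0 : k = 0
    · subst e0; rw [coin_apply_zero p q n hn]
    by_cases e1 : k = 2 * n + 1
    · subst e1; rw [coin_apply_top p q n hn]
    by_cases par : k % 2 = 1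
    · rw [coin_apply_odd p q n hn _ k par (by omega)]
      simp only [liftVec_eq']
      rw [aExt_odd p q n v k par e1, aExt_even p q n v (k + 1) (by omega) (by omega),
        show (k + 1 + 1) / 2 = (k + 1) / 2 by omega, hst]
      norm_cast
      linear_combination (2 * Real.sqrt q * wExt n v ((k + 1) / 2)) * hs2 +
        (2 * Real.sqrt q * wExt n v ((k + 1) / 2)) * hpq
    · rw [coin_apply_even p q n hn _ k (by omega) (by omega) (by omega)]
      simp only [liftVec_eq']
      rw [aExt_even p q n v k (by omega) e0, aExt_odd p q n v (k - 1) (by omega) (by omega),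
        show (k - 1 + 1) / 2 = (k + 1) / 2 by omega, hst]
      norm_cast
      linear_combination (2 * Real.sqrt p * wExt n v ((k + 1) / 2)) * ht2 +
        (2 * Real.sqrt p * wExt n v ((k + 1) / 2)) * hpq
  -- C b = 2 lam a - b
  have hCb : (coinM p q n).mulVec ((shiftM n).mulVec (liftVec p q n v)) =
      ((2 * lam : ℝ) : ℂ) • liftVec p q n v - (shiftM n).mulVec (liftVec p q n v) := by
    funext k
    rcases k with ⟨k, hk⟩
    by_cases e0 : k = 0
    · subst e0
      rw [coin_apply_zero p q n hn]
      simp only [Pi.sub_apply, Pi.smul_apply, smul_eq_mul]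
      rw [hbv 0 (by omega)]
      simp only [liftVec_eq']
      rw [show sigFn 0 = 1 from rfl, aExt_odd p q n v 1 (by omega) (by omega), aExt_zero,
        show (1 + 1) / 2 = 1 by omega]
      norm_cast
      linear_combination 2 * E0
    by_cases e1 : k = 2 * n + 1
    · subst e1
      rw [coin_apply_top p q n hn]
      simp only [Pi.sub_apply, Pi.smul_apply, smul_eq_mul]
      rw [hbv (2 * n + 1) (by omega)]
      simp only [liftVec_eq']
      rw [show sigFn (2 * n + 1) = 2 * n from by unfold sigFn; split <;> omega,
        aExt_even p q n v (2 * n) (by omega) (by omega), aExt_top,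
        show (2 * n + 1) / 2 = n by omega]
      norm_cast
      linear_combination 2 * Etop
    by_cases par : k % 2 = 1
    · -- k = 2m+1 with 0 ≤ m ≤ n-1
      obtain ⟨m, rfl⟩ : ∃ m, k = 2 * m + 1 := ⟨k / 2, by omega⟩
      have hm : m + 1 ≤ n := by omega
      rw [coin_apply_odd p q n hn _ (2 * m + 1) par (by omega)]
      simp only [Pi.sub_apply, Pi.smul_apply, smul_eq_mul]
      rw [hbv (2 * m + 1) (by omega), hbv (2 * m + 1 + 1) (by omega)]
      simp only [liftVec_eq']
      rw [show sigFn (2 * m + 1) = 2 * m from by unfold sigFn; split <;> omega,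
        show sigFn (2 * m + 1 + 1) = 2 * m + 3 from by unfold sigFn; split <;> omega,
        aExt_odd p q n v (2 * m + 1) par (by omega),
        show (2 * m + 1 + 1) / 2 = m + 1 by omega, hst]
      have hE := Emid (m + 1) (by omega) hm
      by_cases em0 : m = 0
      · subst em0
        rw [if_pos rfl] at hE
        rw [aExt_zero]
        by_cases emn : 1 = n
        · rw [if_pos (show 0 + 1 = n by omega)] at hE
          rw [show (2 * 0 + 3 : ℕ) = 2 * n + 1 by omega, aExt_top]
          rw [show (0 : ℕ) + 1 + 1 = n + 1 by omega] at hE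
          norm_cast
          linear_combination 2 * Real.sqrt q * hE - 2 * wExt n v 0 * ht2
        · rw [if_neg (show ¬(0 + 1 = n) by omega)] at hE
          rw [aExt_odd p q n v (2 * 0 + 3) (by omega) (by omega),
            show (2 * 0 + 3 + 1) / 2 = 0 + 1 + 1 by omega]
          norm_cast
          linear_combination 2 * Real.sqrt q * hE - 2 * wExt n v 0 * ht2
      · rw [if_neg (show ¬(m + 1 = 1) by omega)] at hE
        rw [aExt_even p q n v (2 * m) (by omega) (by omega),
          show (2 * m + 1) / 2 = m + 1 - 1 by omega]
        by_cases emn : m + 1 = n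
        · rw [if_pos emn] at hE
          rw [show 2 * m + 3 = 2 * n + 1 by omega, aExt_top]
          rw [show m + 1 + 1 = n + 1 by omega] at hE
          norm_cast
          linear_combination 2 * Real.sqrt q * hE -
            2 * (Real.sqrt p * wExt n v (m + 1 - 1)) * ht2
        · rw [if_neg emn] at hE
          rw [aExt_odd p q n v (2 * m + 3) (by omega) (by omega),
            show (2 * m + 3 + 1) / 2 = m + 1 + 1 by omega]
          norm_cast
          linear_combination 2 * Real.sqrt q * hE -
            2 * (Real.sqrt p * wExt n v (m + 1 - 1)) * ht2
    · -- k = 2m+2 with 0 ≤ m ≤ n-1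
      obtain ⟨m, rfl⟩ : ∃ m, k = 2 * m + 2 := ⟨(k - 2) / 2, by omega⟩
      have hm : m + 1 ≤ n := by omega
      rw [coin_apply_even p q n hn _ (2 * m + 2) (by omega) (by omega) (by omega)]
      simp only [Pi.sub_apply, Pi.smul_apply, smul_eq_mul]
      rw [hbv (2 * m + 2 - 1) (by omega), hbv (2 * m + 2) (by omega)]
      simp only [liftVec_eq']
      rw [show sigFn (2 * m + 2 - 1) = 2 * m from by unfold sigFn; split <;> omega,
        show sigFn (2 * m + 2) = 2 * m + 3 from by unfold sigFn; split <;> omega,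
        aExt_even p q n v (2 * m + 2) (by omega) (by omega),
        show (2 * m + 2 + 1) / 2 = m + 1 by omega, hst]
      have hE := Emid (m + 1) (by omega) hm
      by_cases em0 : m = 0
      · subst em0
        rw [if_pos rfl] at hE
        rw [aExt_zero]
        by_cases emn : 1 = n
        · rw [if_pos (show 0 + 1 = n by omega)] at hE
          rw [show (2 * 0 + 3 : ℕ) = 2 * n + 1 by omega, aExt_top]
          rw [show (0 : ℕ) + 1 + 1 = n + 1 by omega] at hE
          norm_cast
          linear_combination 2 * Real.sqrt p * hE - 2 * wExt n v (n + 1) * hs2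
        · rw [if_neg (show ¬(0 + 1 = n) by omega)] at hE
          rw [aExt_odd p q n v (2 * 0 + 3) (by omega) (by omega),
            show (2 * 0 + 3 + 1) / 2 = 0 + 1 + 1 by omega]
          norm_cast
          linear_combination 2 * Real.sqrt p * hE -
            2 * (Real.sqrt q * wExt n v (0 + 1 + 1)) * hs2
      · rw [if_neg (show ¬(m + 1 = 1) by omega)] at hE
        rw [aExt_even p q n v (2 * m) (by omega) (by omega),
          show (2 * m + 1) / 2 = m + 1 - 1 by omega]
        by_cases emn : m + 1 = n
        · rw [if_pos emn] at hE
          rw [show 2 * m + 3 = 2 * n + 1 by omega, aExt_top]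
          rw [show m + 1 + 1 = n + 1 by omega] at hE
          norm_cast
          linear_combination 2 * Real.sqrt p * hE - 2 * wExt n v (n + 1) * hs2
        · rw [if_neg emn] at hE
          rw [aExt_odd p q n v (2 * m + 3) (by omega) (by omega),
            show (2 * m + 3 + 1) / 2 = m + 1 + 1 by omega]
          norm_cast
          linear_combination 2 * Real.sqrt p * hE -
            2 * (Real.sqrt q * wExt n v (m + 1 + 1)) * hs2
  -- U a = b
  have hUa : (walkM p q n).mulVec (liftVec p q n v) = (shiftM n).mulVec (liftVec p q n v) := by
    unfold walkM
    rw [← Matrix.mulVec_mulVec, hCa]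
  -- U b = 2 lam b - a
  have hUb : (walkM p q n).mulVec ((shiftM n).mulVec (liftVec p q n v)) =
      ((2 * lam : ℝ) : ℂ) • (shiftM n).mulVec (liftVec p q n v) - liftVec p q n v := by
    unfold walkM
    rw [← Matrix.mulVec_mulVec, hCb, Matrix.mulVec_sub, Matrix.mulVec_smul, shift_shift]
  -- norm of a
  have hnorm : ∑ k : Fin (2 * n + 2), ‖liftVec p q n v k‖ ^ 2 = 1 := by
    have h1 : ∀ k : Fin (2 * n + 2),
        ‖liftVec p q n v k‖ ^ 2 = (fun i => aExt p q n v i ^ 2) k.1 := by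
      intro k
      rw [liftVec_eq, Complex.norm_real, Real.norm_eq_abs, sq_abs]
    rw [Finset.sum_congr rfl fun k _ => h1 k,
      Fin.sum_univ_eq_sum_range (fun i => aExt p q n v i ^ 2) (2 * n + 2),
      show 2 * n + 2 = 2 * n + 1 + 1 from rfl, Finset.sum_range_succ, Finset.sum_range_succ',
      sum_range_two_mul n (fun i => aExt p q n v (i + 1) ^ 2)]
    have h2 : ∀ i ∈ range n,
        aExt p q n v (2 * i + 1) ^ 2 + aExt p q n v (2 * i + 1 + 1) ^ 2
          = wExt n v (i + 1) ^ 2 := by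
      intro i hi
      rw [Finset.mem_range] at hi
      rw [aExt_odd p q n v (2 * i + 1) (by omega) (by omega),
        aExt_even p q n v (2 * i + 1 + 1) (by omega) (by omega),
        show (2 * i + 1 + 1) / 2 = i + 1 by omega, show (2 * i + 1 + 1 + 1) / 2 = i + 1 by omega]
      linear_combination wExt n v (i + 1) ^ 2 * ht2 + wExt n v (i + 1) ^ 2 * hs2 +
        wExt n v (i + 1) ^ 2 * hpq
    rw [Finset.sum_congr rfl h2, aExt_zero, aExt_top]
    have h3 := hv'
    rw [show n + 2 = n + 1 + 1 from rfl, Finset.sum_range_succ, Finset.sum_range_succ'] at h3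
    linarith
  -- the pairing permutation
  have hsig : Function.Involutive
      (fun k : Fin (2 * n + 2) => (⟨sigFn k.1, sigFn_lt k.2⟩ : Fin (2 * n + 2))) := by
    intro k
    exact Fin.ext (sigFn_sigFn k.1)
  refine ⟨hnorm, ?_, hUa, hUb, ?_, ?_⟩
  · -- norm of b
    have h1 : ∀ k : Fin (2 * n + 2),
        ‖(shiftM n).mulVec (liftVec p q n v) k‖ ^ 2 =
          (fun j : Fin (2 * n + 2) => ‖liftVec p q n v j‖ ^ 2)
            (hsig.toPerm _ k) := by
      intro k
      rw [shift_apply]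
      rfl
    rw [Finset.sum_congr rfl fun k _ => h1 k,
      Equiv.sum_comp (hsig.toPerm _) (fun j => ‖liftVec p q n v j‖ ^ 2)]
    exact hnorm
  · -- inner product
    have h1 : ∀ k : Fin (2 * n + 2),
        (starRingEnd ℂ) (liftVec p q n v k) * (shiftM n).mulVec (liftVec p q n v) k =
          (((fun i => aExt p q n v i * aExt p q n v (sigFn i)) k.1 : ℝ) : ℂ) := by
      intro k
      rcases k with ⟨k, hk⟩
      rw [hbv k hk, liftVec_eq]
      dsimp only
      rw [Complex.conj_ofReal]
      push_cast
      ring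
    rw [Finset.sum_congr rfl fun k _ => h1 k, ← Complex.ofReal_sum]
    rw [Complex.ofReal_inj]
    rw [Fin.sum_univ_eq_sum_range (fun i => aExt p q n v i * aExt p q n v (sigFn i)) (2 * n + 2),
      show 2 * n + 2 = 2 * (n + 1) by ring,
      sum_range_two_mul (n + 1) (fun i => aExt p q n v i * aExt p q n v (sigFn i))]
    set hfun : ℕ → ℝ := fun i =>
      (if i = 0 then Real.sqrt q else if i = n then Real.sqrt p else Real.sqrt p * Real.sqrt q) *
        (wExt n v i * wExt n v (i + 1)) with hfundef
    have h2 : ∀ i ∈ range (n + 1),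
        (aExt p q n v (2 * i) * aExt p q n v (sigFn (2 * i)) +
          aExt p q n v (2 * i + 1) * aExt p q n v (sigFn (2 * i + 1))) = 2 * hfun i := by
      intro i hi
      rw [Finset.mem_range] at hi
      rw [show sigFn (2 * i) = 2 * i + 1 from by unfold sigFn; split <;> omega,
        show sigFn (2 * i + 1) = 2 * i from by unfold sigFn; split <;> omega, hfundef]
      dsimp only
      by_cases e0 : i = 0
      · subst e0
        rw [if_pos rfl, aExt_zero,
          aExt_odd p q n v (2 * 0 + 1) (by omega) (by omega),
          show (2 * 0 + 1 + 1) / 2 = 0 + 1 by omega]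
        ring
      by_cases en : i = n
      · rw [en, if_neg (show ¬(n = 0) by omega), if_pos rfl, aExt_top,
          aExt_even p q n v (2 * n) (by omega) (by omega),
          show (2 * n + 1) / 2 = n by omega]
        ring
      · rw [if_neg e0, if_neg en,
          aExt_even p q n v (2 * i) (by omega) (by omega),
          aExt_odd p q n v (2 * i + 1) (by omega) (by omega),
          show (2 * i + 1) / 2 = i by omega, show (2 * i + 1 + 1) / 2 = i + 1 by omega]
        ring
    rw [Finset.sum_congr rfl h2, ← Finset.mul_sum]
    -- now show 2 * ∑ hfun = lam
    have key : ∑ i ∈ range (n + 2), wExt n v i * (lam * wExt n v i) = lam := by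
      have : ∑ i ∈ range (n + 2), wExt n v i * (lam * wExt n v i) =
          lam * ∑ i ∈ range (n + 2), wExt n v i ^ 2 := by
        rw [Finset.mul_sum]
        exact Finset.sum_congr rfl fun i _ => by ring
      rw [this, hv', mul_one]
    rw [show n + 2 = n + 1 + 1 from rfl, Finset.sum_range_succ, Finset.sum_range_succ'] at key
    have hmid : ∀ i ∈ range n,
        wExt n v (i + 1) * (lam * wExt n v (i + 1)) = hfun i + hfun (i + 1) := by
      intro i hi
      rw [Finset.mem_range] at hi
      rw [← Emid (i + 1) (by omega) (by omega), show i + 1 - 1 = i by omega, hfundef]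
      dsimp only
      split_ifs <;> (try contradiction) <;> (try (exfalso; omega)) <;> ring
    rw [Finset.sum_congr rfl hmid, Finset.sum_add_distrib] at key
    have e1 : ∑ i ∈ range n, hfun (i + 1) + hfun 0 = ∑ i ∈ range (n + 1), hfun i :=
      (Finset.sum_range_succ' hfun n).symm
    have e2 : ∑ i ∈ range n, hfun i + hfun n = ∑ i ∈ range (n + 1), hfun i :=
      (Finset.sum_range_succ hfun n).symm
    have hf0 : wExt n v 0 * (lam * wExt n v 0) = hfun 0 := by
      rw [hfundef]
      dsimp only
      rw [if_pos rfl, ← E0]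
      ring
    have hftop : wExt n v (n + 1) * (lam * wExt n v (n + 1)) = hfun n := by
      rw [hfundef]
      dsimp only
      rw [if_neg (show ¬(n = 0) by omega), if_pos rfl, ← Etop]
      ring
    rw [hf0, hftop] at key
    linarith [key, e1, e2]
  · -- span preservation
    intro x hx
    rw [Submodule.mem_span_pair] at hx
    obtain ⟨c, d, rfl⟩ := hx
    rw [Matrix.mulVec_add, Matrix.mulVec_smul, Matrix.mulVec_smul, hUa, hUb]
    have ha : liftVec p q n v ∈
        Submodule.span ℂ {liftVec p q n v, (shiftM n).mulVec (liftVec p q n v)} :=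
      Submodule.subset_span (by simp)
    have hb : (shiftM n).mulVec (liftVec p q n v) ∈
        Submodule.span ℂ {liftVec p q n v, (shiftM n).mulVec (liftVec p q n v)} :=
      Submodule.subset_span (by simp)
    exact Submodule.add_mem _ (Submodule.smul_mem _ _ hb)
      (Submodule.smul_mem _ _ (Submodule.sub_mem _ (Submodule.smul_mem _ _ hb) ha))
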